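/- There is a computable reduction showing: the problem of deciding, for two disjoint automatic relations R₁, R₂ ⊆ Σ* × Γ*, whether there exists a recognizable relation R with R₁ ⊆ R and R ∩ R₂ = ∅, reduces to the resynchronized definability problem with source and target languages of finite shiftlag. Concretely, with S the (ΣΓ)*(Σ* + Γ*)-controlled representation of the complement of R₂ and T = Σ*Γ* ∪ M where M is the (ΣΓ)*(Σ* + Γ*)-controlled representation of (complement of R₁) ∩ (complement of R₂), one has: ⟦S⟧ ∈ Rel(T) if and only if R₁ and R₂ are separable by a recognizable relation. -/

import Mathlib

open List

/-- A language is regular. -/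
def IsReg {α : Type} (L : Set (List α)) : Prop := Language.IsRegular L

/-- Erase output letters: keep the Σ-part of a synchronization word. -/
def piIn {σ γ : Type} (w : List (σ ⊕ γ)) : List σ := w.filterMap Sum.getLeft?
/-- Erase input letters: keep the Γ-part of a synchronization word. -/
def piOut {σ γ : Type} (w : List (σ ⊕ γ)) : List γ := w.filterMap Sum.getRight?
/-- `⟦w⟧`, the pair synchronized by `w`. -/
def syncPair {σ γ : Type} (w : List (σ ⊕ γ)) : List σ × List γ := (piIn w, piOut w)
/-- `⟦L⟧`, the relation defined by a synchronization language. -/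
def syncRel {σ γ : Type} (L : Set (List (σ ⊕ γ))) : Set (List σ × List γ) := syncPair '' L

def rdom {σ γ : Type} (R : Set (List σ × List γ)) : Set (List σ) := {u | ∃ v, (u, v) ∈ R}

/-- A recognizable relation: a finite union of products of regular languages. -/
def Recognizable {σ γ : Type} (R : Set (List σ × List γ)) : Prop :=
  ∃ (n : ℕ) (U : Fin n → Set (List σ)) (V : Fin n → Set (List γ)),
    (∀ i, IsReg (U i) ∧ IsReg (V i)) ∧
    R = ⋃ i, {p : List σ × List γ | p.1 ∈ U i ∧ p.2 ∈ V i}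

/-- lag of the (1-based) position `i` of `w`. -/
def lagAt {σ γ : Type} (w : List (σ ⊕ γ)) (i : ℕ) : ℕ :=
  ((((w.take i).countP Sum.isLeft : ℕ) : ℤ) - (((w.take i).countP Sum.isRight : ℕ) : ℤ)).natAbs

/-- maximal lag of a position of `w`. -/
def lagW {σ γ : Type} (w : List (σ ⊕ γ)) : ℕ := (Finset.range (w.length + 1)).sup (lagAt w)

/-- number of shifts of `w`. -/
def shiftCount {σ γ : Type} (w : List (σ ⊕ γ)) : ℕ :=
  (w.zip w.tail).countP fun p => p.1.isLeft != p.2.isLeft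

/-- the (0-based) list of shift positions of `w`, in increasing order. -/
def shiftList {σ γ : Type} (w : List (σ ⊕ γ)) : List ℕ :=
  (List.range w.length).filter fun j =>
    decide (j + 1 < w.length) &&
      decide ((w[j]?).map Sum.isLeft ≠ (w[j + 1]?).map Sum.isLeft)

/-- shiftlag of `w`: the largest `n` such that `w` has `n` consecutive shifts that are all
`≥n`-lagged. -/
noncomputable def shiftlagW {σ γ : Type} (w : List (σ ⊕ γ)) : ℕ :=
  sSup {n : ℕ | ∃ l : List ℕ, l <:+: shiftList w ∧ l.length = n ∧ ∀ j ∈ l, n ≤ lagAt w (j + 1)}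

def FiniteShift {σ γ : Type} (L : Set (List (σ ⊕ γ))) : Prop := ∃ k, ∀ w ∈ L, shiftCount w ≤ k
def FiniteLag {σ γ : Type} (L : Set (List (σ ⊕ γ))) : Prop := ∃ k, ∀ w ∈ L, lagW w ≤ k
def FiniteShiftlag {σ γ : Type} (L : Set (List (σ ⊕ γ))) : Prop := ∃ k, ∀ w ∈ L, shiftlagW w ≤ k

/-- left quotient `u⁻¹L`. -/
def leftQuot {α : Type} (u : List α) (L : Set (List α)) : Set (List α) := {z | u ++ z ∈ L}

/-- `w ⪯_T w'` : `w` is at most as synchronous as `w'` inside `T`. -/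
def syncLe {σ γ : Type} (T : Set (List (σ ⊕ γ))) (w w' : List (σ ⊕ γ)) : Prop :=
  ∀ i : ℕ, FiniteShift (leftQuot (w'.take i) T) → FiniteShift (leftQuot (w.take i) T)

def allsync {σ γ : Type} (S T : Set (List (σ ⊕ γ))) : Set (List (σ ⊕ γ)) :=
  {w | w ∈ T ∧ syncPair w ∈ syncRel S}

def maxsync {σ γ : Type} (S T : Set (List (σ ⊕ γ))) : Set (List (σ ⊕ γ)) :=
  {w | w ∈ T ∧ syncPair w ∈ syncRel S ∧
    ∀ w' ∈ T, syncPair w' = syncPair w → syncLe T w' w}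

def minsync {σ γ : Type} (S T : Set (List (σ ⊕ γ))) : Set (List (σ ⊕ γ)) :=
  {w | w ∈ T ∧ syncPair w ∈ syncRel S ∧
    ∀ w' ∈ T, syncPair w' = syncPair w → syncLe T w w'}

/-- `Rel(T)`: relations definable by regular subsets of `T`. -/
def RelOf {σ γ : Type} (T : Set (List (σ ⊕ γ))) : Set (Set (List σ × List γ)) :=
  {R | ∃ T' : Set (List (σ ⊕ γ)), T' ⊆ T ∧ IsReg T' ∧ syncRel T' = R}

/-- the canonical synchronization language `(ΣΓ)*(Σ* + Γ*)` of automatic relations. -/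
def CanonAut (σ γ : Type) : Set (List (σ ⊕ γ)) :=
  {w | ∃ (p : List (σ × γ)) (x : List σ) (y : List γ),
    (x = [] ∨ y = []) ∧
    w = (p.flatMap fun ab => [Sum.inl ab.1, Sum.inr ab.2]) ++ x.map Sum.inl ++ y.map Sum.inr}

/-- the canonical synchronization language `Σ*Γ*` of recognizable relations. -/
def InOut (σ γ : Type) : Set (List (σ ⊕ γ)) :=
  {w | ∃ (x : List σ) (y : List γ), w = x.map Sum.inl ++ y.map Sum.inr}

/-- An automatic relation: definable by a regular subset of `(ΣΓ)*(Σ* + Γ*)`. -/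
def Automatic {σ γ : Type} (R : Set (List σ × List γ)) : Prop :=
  ∃ L : Set (List (σ ⊕ γ)), L ⊆ CanonAut σ γ ∧ IsReg L ∧ syncRel L = R

/-- `x` and `y` are compatible: equal length and extendable to a common pair. -/
def Compatible {σ γ : Type} (x y : List (σ ⊕ γ)) : Prop :=
  x.length = y.length ∧ ∃ u v : List (σ ⊕ γ), syncPair (x ++ u) = syncPair (y ++ v)

/-- `diff(x,y) = (u,v)`: `u,v` are the shortest words with `⟦xu⟧ = ⟦yv⟧`. -/
def IsDiff {σ γ : Type} (x y u v : List (σ ⊕ γ)) : Prop :=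
  syncPair (x ++ u) = syncPair (y ++ v) ∧
    ∀ u' v' : List (σ ⊕ γ), syncPair (x ++ u') = syncPair (y ++ v') →
      u.length ≤ u'.length ∧ v.length ≤ v'.length

section Aux
variable {σ γ : Type}

@[simp] lemma piIn_nil : piIn ([] : List (σ ⊕ γ)) = [] := rfl
@[simp] lemma piOut_nil : piOut ([] : List (σ ⊕ γ)) = [] := rfl
@[simp] lemma piIn_cons_inl (a : σ) (w : List (σ ⊕ γ)) : piIn (Sum.inl a :: w) = a :: piIn w := by
  simp [piIn]
@[simp] lemma piIn_cons_inr (b : γ) (w : List (σ ⊕ γ)) : piIn (Sum.inr b :: w) = piIn w := by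
  simp [piIn]; rfl
@[simp] lemma piOut_cons_inl (a : σ) (w : List (σ ⊕ γ)) : piOut (Sum.inl a :: w) = piOut w := by
  simp [piOut]; rfl
@[simp] lemma piOut_cons_inr (b : γ) (w : List (σ ⊕ γ)) : piOut (Sum.inr b :: w) = b :: piOut w := by
  simp [piOut]
@[simp] lemma piIn_append (u v : List (σ ⊕ γ)) : piIn (u ++ v) = piIn u ++ piIn v := by
  simp [piIn]
@[simp] lemma piOut_append (u v : List (σ ⊕ γ)) : piOut (u ++ v) = piOut u ++ piOut v := by
  simp [piOut]
@[simp] lemma piIn_map_inl (x : List σ) : piIn (x.map Sum.inl : List (σ ⊕ γ)) = x := by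
  simp [piIn, List.filterMap_map]; exact List.filterMap_some
@[simp] lemma piIn_map_inr (y : List γ) : piIn (y.map Sum.inr : List (σ ⊕ γ)) = [] := by
  simp [piIn, List.filterMap_map]
@[simp] lemma piOut_map_inl (x : List σ) : piOut (x.map Sum.inl : List (σ ⊕ γ)) = [] := by
  simp [piOut, List.filterMap_map]
@[simp] lemma piOut_map_inr (y : List γ) : piOut (y.map Sum.inr : List (σ ⊕ γ)) = y := by
  simp [piOut, List.filterMap_map]; exact List.filterMap_some

/-- canonical `(ΣΓ)*(Σ*+Γ*)` synchronization word of a pair. -/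
def canon : List σ → List γ → List (σ ⊕ γ)
  | [], v => v.map Sum.inr
  | a :: u, [] => (a :: u).map Sum.inl
  | a :: u, b :: v => Sum.inl a :: Sum.inr b :: canon u v

lemma canon_mem (u : List σ) (v : List γ) : canon u v ∈ CanonAut σ γ := by
  induction u generalizing v with
  | nil => exact ⟨[], [], v, Or.inl rfl, by simp [canon]⟩
  | cons a u ih =>
    cases v with
    | nil => exact ⟨[], a :: u, [], Or.inr rfl, by simp [canon]⟩
    | cons b v =>
      obtain ⟨p, x, y, hxy, hw⟩ := ih v
      exact ⟨(a, b) :: p, x, y, hxy, by simp [canon, hw]⟩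

@[simp] lemma syncPair_canon (u : List σ) (v : List γ) : syncPair (canon u v) = (u, v) := by
  induction u generalizing v with
  | nil => simp [canon, syncPair]
  | cons a u ih =>
    cases v with
    | nil => simp [canon, syncPair]
    | cons b v =>
      have := ih v
      simp [canon, syncPair] at this ⊢
      exact this

lemma canon_eq_of_mem {w : List (σ ⊕ γ)} (hw : w ∈ CanonAut σ γ) :
    canon (piIn w) (piOut w) = w := by
  obtain ⟨p, x, y, hxy, rfl⟩ := hw
  induction p with
  | nil =>
    rcases hxy with rfl | rfl
    · simp [canon]
    · cases x with
      | nil => simp [canon]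
      | cons a x => simp [canon]
  | cons ab p ih =>
    obtain ⟨a, b⟩ := ab
    have hstep : ((((a, b) :: p).flatMap fun ab => [Sum.inl ab.1, Sum.inr ab.2]) ++
        x.map Sum.inl ++ y.map Sum.inr)
        = Sum.inl a :: Sum.inr b ::
          ((p.flatMap fun ab => [Sum.inl ab.1, Sum.inr ab.2]) ++ x.map Sum.inl ++ y.map Sum.inr) := by
      simp
    rw [hstep, piIn_cons_inl, piIn_cons_inr, piOut_cons_inl, piOut_cons_inr]
    rw [show ∀ (a' : σ) (b' : γ) u v, canon (a' :: u) (b' :: v)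
        = Sum.inl a' :: Sum.inr b' :: canon u v from fun _ _ _ _ => rfl]
    rw [ih]

lemma canonAut_inj {w w' : List (σ ⊕ γ)} (h : w ∈ CanonAut σ γ) (h' : w' ∈ CanonAut σ γ)
    (hp : syncPair w = syncPair w') : w = w' := by
  have h1 := canon_eq_of_mem h
  have h2 := canon_eq_of_mem h'
  have : piIn w = piIn w' ∧ piOut w = piOut w' := by
    simpa [syncPair, Prod.ext_iff] using hp
  rw [← h1, ← h2, this.1, this.2]

/-- canonical `Σ*Γ*` word of a pair. -/
def canonIO (u : List σ) (v : List γ) : List (σ ⊕ γ) := u.map Sum.inl ++ v.map Sum.inr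

lemma canonIO_mem (u : List σ) (v : List γ) : canonIO u v ∈ InOut σ γ := ⟨u, v, rfl⟩

@[simp] lemma syncPair_canonIO (u : List σ) (v : List γ) : syncPair (canonIO u v) = (u, v) := by
  simp [canonIO, syncPair]

lemma canonIO_eq_of_mem {w : List (σ ⊕ γ)} (hw : w ∈ InOut σ γ) :
    canonIO (piIn w) (piOut w) = w := by
  obtain ⟨x, y, rfl⟩ := hw
  simp [canonIO]
-- semantic lemmas
lemma syncRel_canonSet (R : Set (List σ × List γ)) :
    syncRel {w | w ∈ CanonAut σ γ ∧ syncPair w ∈ R} = R := by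
  ext p
  constructor
  · rintro ⟨w, ⟨-, hR⟩, rfl⟩; exact hR
  · intro hp
    exact ⟨canon p.1 p.2, ⟨canon_mem _ _, by simpa using hp⟩, by simp⟩

lemma syncRel_inOutSet (R : Set (List σ × List γ)) :
    syncRel {w | w ∈ InOut σ γ ∧ syncPair w ∈ R} = R := by
  ext p
  constructor
  · rintro ⟨w, ⟨-, hR⟩, rfl⟩; exact hR
  · intro hp
    exact ⟨canonIO p.1 p.2, ⟨canonIO_mem _ _, by simpa using hp⟩, by simp⟩

lemma subset_canonAut_eq {L : Set (List (σ ⊕ γ))} {R : Set (List σ × List γ)}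
    (hL : L ⊆ CanonAut σ γ) (hR : syncRel L = R) :
    L = {w | w ∈ CanonAut σ γ ∧ syncPair w ∈ R} := by
  ext w
  constructor
  · intro hw; exact ⟨hL hw, hR ▸ ⟨w, hw, rfl⟩⟩
  · rintro ⟨hwc, hwR⟩
    rw [← hR] at hwR
    obtain ⟨w', hw', hp⟩ := hwR
    rwa [canonAut_inj (hL hw') hwc hp] at hw'

lemma mem_syncRel_of_subset_inOut {L : Set (List (σ ⊕ γ))} (hL : L ⊆ InOut σ γ)
    (u : List σ) (v : List γ) : (u, v) ∈ syncRel L ↔ canonIO u v ∈ L := by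
  constructor
  · rintro ⟨w, hw, hp⟩
    have := canonIO_eq_of_mem (hL hw)
    rw [show piIn w = u from congrArg Prod.fst hp, show piOut w = v from congrArg Prod.snd hp] at this
    rwa [this]
  · intro h; exact ⟨canonIO u v, h, by simp⟩

lemma syncRel_union (A B : Set (List (σ ⊕ γ))) : syncRel (A ∪ B) = syncRel A ∪ syncRel B :=
  Set.image_union _ _ _

lemma syncRel_mono {A B : Set (List (σ ⊕ γ))} (h : A ⊆ B) : syncRel A ⊆ syncRel B :=
  Set.image_mono h
-- Regularity toolkit
section Reg
variable {α : Type}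

lemma isReg_def {L : Set (List α)} :
    IsReg L ↔ ∃ Q : Type, ∃ _ : Fintype Q, ∃ M : DFA α Q, M.accepts = L := Iff.rfl

lemma isReg_compl {L : Set (List α)} (h : IsReg L) : IsReg Lᶜ := by
  obtain ⟨Q, hQ, M, rfl⟩ := h
  refine ⟨Q, hQ, ⟨M.step, M.start, M.acceptᶜ⟩, ?_⟩
  ext x
  simp only [DFA.mem_accepts, DFA.eval, DFA.evalFrom, DFA.accepts, DFA.acceptsFrom]
  exact Iff.rfl

private def prodDFA {Q₁ Q₂ : Type} (M : DFA α Q₁) (N : DFA α Q₂) (P : Set (Q₁ × Q₂)) :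
    DFA α (Q₁ × Q₂) :=
  ⟨fun q a => (M.step q.1 a, N.step q.2 a), (M.start, N.start), P⟩

private lemma prodDFA_eval {Q₁ Q₂ : Type} (M : DFA α Q₁) (N : DFA α Q₂) (P : Set (Q₁ × Q₂))
    (x : List α) : (prodDFA M N P).eval x = (M.eval x, N.eval x) := by
  suffices h : ∀ (q : Q₁ × Q₂), (prodDFA M N P).evalFrom q x = (M.evalFrom q.1 x, N.evalFrom q.2 x) from
    h _
  intro q
  induction x generalizing q with
  | nil => rfl
  | cons a x ih => exact ih _

lemma isReg_inter {L₁ L₂ : Set (List α)} (h₁ : IsReg L₁) (h₂ : IsReg L₂) : IsReg (L₁ ∩ L₂) := by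
  obtain ⟨Q₁, hQ₁, M, rfl⟩ := h₁
  obtain ⟨Q₂, hQ₂, N, rfl⟩ := h₂
  refine ⟨Q₁ × Q₂, @instFintypeProd _ _ hQ₁ hQ₂,
    prodDFA M N {q | q.1 ∈ M.accept ∧ q.2 ∈ N.accept}, ?_⟩
  ext x
  have := prodDFA_eval M N {q : Q₁ × Q₂ | q.1 ∈ M.accept ∧ q.2 ∈ N.accept} x
  simp only [DFA.mem_accepts] at *
  constructor
  · intro hx; rw [this] at hx; exact hx
  · intro hx; rw [this]; exact hx

lemma isReg_union {L₁ L₂ : Set (List α)} (h₁ : IsReg L₁) (h₂ : IsReg L₂) : IsReg (L₁ ∪ L₂) := by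
  obtain ⟨Q₁, hQ₁, M, rfl⟩ := h₁
  obtain ⟨Q₂, hQ₂, N, rfl⟩ := h₂
  refine ⟨Q₁ × Q₂, @instFintypeProd _ _ hQ₁ hQ₂,
    prodDFA M N {q | q.1 ∈ M.accept ∨ q.2 ∈ N.accept}, ?_⟩
  ext x
  have := prodDFA_eval M N {q : Q₁ × Q₂ | q.1 ∈ M.accept ∨ q.2 ∈ N.accept} x
  simp only [DFA.mem_accepts] at *
  constructor
  · intro hx; rw [this] at hx; exact hx
  · intro hx; rw [this]; exact hx

lemma isReg_empty : IsReg (∅ : Set (List α)) :=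
  ⟨Unit, inferInstance, ⟨fun _ _ => (), (), ∅⟩, by ext x; simp only [DFA.mem_accepts]; exact iff_of_false (Set.notMem_empty _) (Set.notMem_empty _)⟩

lemma isReg_iUnion_fin : ∀ (n : ℕ) (f : Fin n → Set (List α)),
    (∀ i, IsReg (f i)) → IsReg (⋃ i, f i)
  | 0, f, _ => by simpa using isReg_empty
  | n + 1, f, hf => by
    have h1 : IsReg (⋃ i : Fin n, f i.succ) := isReg_iUnion_fin n _ fun i => hf i.succ
    have : (⋃ i, f i) = f 0 ∪ ⋃ i : Fin n, f i.succ := by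
      ext x
      simp only [Set.mem_iUnion, Set.mem_union]
      constructor
      · rintro ⟨i, hi⟩
        rcases Fin.eq_zero_or_eq_succ i with rfl | ⟨j, rfl⟩
        · exact Or.inl hi
        · exact Or.inr ⟨j, hi⟩
      · rintro (h | ⟨j, hj⟩)
        · exact ⟨0, h⟩
        · exact ⟨j.succ, hj⟩
    rw [this]
    exact isReg_union (hf 0) h1

end Reg

-- preimages under piIn/piOut
lemma isReg_piIn_preimage {U : Set (List σ)} (h : IsReg U) :
    IsReg {w : List (σ ⊕ γ) | piIn w ∈ U} := by
  obtain ⟨Q, hQ, M, rfl⟩ := h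
  refine ⟨Q, hQ, ⟨fun q a => Sum.elim (M.step q) (fun _ => q) a, M.start, M.accept⟩, ?_⟩
  have key : ∀ (w : List (σ ⊕ γ)) (q : Q),
      List.foldl (fun q a => Sum.elim (M.step q) (fun _ => q) a) q w = M.evalFrom q (piIn w) := by
    intro w
    induction w with
    | nil => intro q; rfl
    | cons a w ih =>
      intro q
      cases a with
      | inl a => simp only [piIn_cons_inl]; exact ih _
      | inr b => simp only [piIn_cons_inr]; exact ih _
  ext w
  simp only [DFA.mem_accepts, DFA.eval, DFA.evalFrom, Set.mem_setOf_eq]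
  rw [key]
  rfl

lemma isReg_piOut_preimage {V : Set (List γ)} (h : IsReg V) :
    IsReg {w : List (σ ⊕ γ) | piOut w ∈ V} := by
  obtain ⟨Q, hQ, M, rfl⟩ := h
  refine ⟨Q, hQ, ⟨fun q a => Sum.elim (fun _ => q) (M.step q) a, M.start, M.accept⟩, ?_⟩
  have key : ∀ (w : List (σ ⊕ γ)) (q : Q),
      List.foldl (fun q a => Sum.elim (fun _ => q) (M.step q) a) q w = M.evalFrom q (piOut w) := by
    intro w
    induction w with
    | nil => intro q; rfl
    | cons a w ih =>
      intro q
      cases a with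
      | inl a => simp only [piOut_cons_inl]; exact ih _
      | inr b => simp only [piOut_cons_inr]; exact ih _
  ext w
  simp only [DFA.mem_accepts, DFA.eval, DFA.evalFrom, Set.mem_setOf_eq]
  rw [key]
  rfl
-- DFA for InOut
inductive St : Type where
  | A | B | C | D
deriving DecidableEq

instance : Fintype St where
  elems := {St.A, St.B, St.C, St.D}
  complete := fun x => by cases x <;> simp

def pairsW (p : List (σ × γ)) : List (σ ⊕ γ) := p.flatMap fun ab => [Sum.inl ab.1, Sum.inr ab.2]

def InlStar (σ γ : Type) : Set (List (σ ⊕ γ)) := {w | ∃ x : List σ, w = x.map Sum.inl}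
def InrStar (σ γ : Type) : Set (List (σ ⊕ γ)) := {w | ∃ y : List γ, w = y.map Sum.inr}

lemma nil_mem_InlStar : ([] : List (σ ⊕ γ)) ∈ InlStar σ γ := ⟨[], rfl⟩
lemma nil_mem_InrStar : ([] : List (σ ⊕ γ)) ∈ InrStar σ γ := ⟨[], rfl⟩

lemma InlStar_cons_inl (a : σ) (w : List (σ ⊕ γ)) :
    Sum.inl a :: w ∈ InlStar σ γ ↔ w ∈ InlStar σ γ := by
  constructor
  · rintro ⟨x, h⟩
    cases x with
    | nil => simp at h
    | cons c x => simp only [List.map_cons, List.cons.injEq] at h; exact ⟨x, h.2⟩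
  · rintro ⟨x, rfl⟩; exact ⟨a :: x, rfl⟩

lemma InlStar_cons_inr (b : γ) (w : List (σ ⊕ γ)) : Sum.inr b :: w ∉ InlStar σ γ := by
  rintro ⟨x, h⟩
  cases x with
  | nil => simp at h
  | cons c x => simp at h

lemma InrStar_cons_inr (b : γ) (w : List (σ ⊕ γ)) :
    Sum.inr b :: w ∈ InrStar σ γ ↔ w ∈ InrStar σ γ := by
  constructor
  · rintro ⟨y, h⟩
    cases y with
    | nil => simp at h
    | cons c y => simp only [List.map_cons, List.cons.injEq] at h; exact ⟨y, h.2⟩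
  · rintro ⟨y, rfl⟩; exact ⟨b :: y, rfl⟩

lemma InrStar_cons_inl (a : σ) (w : List (σ ⊕ γ)) : Sum.inl a :: w ∉ InrStar σ γ := by
  rintro ⟨y, h⟩
  cases y with
  | nil => simp at h
  | cons c y => simp at h

-- InOut decomposition lemmas
lemma nil_mem_InOut : ([] : List (σ ⊕ γ)) ∈ InOut σ γ := ⟨[], [], rfl⟩

lemma InOut_cons_inl (a : σ) (w : List (σ ⊕ γ)) :
    Sum.inl a :: w ∈ InOut σ γ ↔ w ∈ InOut σ γ := by
  constructor
  · rintro ⟨x, y, h⟩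
    cases x with
    | nil =>
      cases y with
      | nil => simp at h
      | cons c y => simp at h
    | cons c x =>
      simp only [List.map_cons, List.cons_append, List.cons.injEq] at h
      exact ⟨x, y, h.2⟩
  · rintro ⟨x, y, rfl⟩; exact ⟨a :: x, y, rfl⟩

lemma InOut_cons_inr (b : γ) (w : List (σ ⊕ γ)) :
    Sum.inr b :: w ∈ InOut σ γ ↔ w ∈ InrStar σ γ := by
  constructor
  · rintro ⟨x, y, h⟩
    cases x with
    | nil =>
      cases y with
      | nil => simp at h
      | cons c y =>
        simp only [List.map_nil, List.nil_append, List.map_cons, List.cons.injEq] at h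
        exact ⟨y, h.2⟩
    | cons c x => simp at h
  · rintro ⟨y, rfl⟩; exact ⟨[], b :: y, rfl⟩

def ioDFA (σ γ : Type) : DFA (σ ⊕ γ) St where
  step q a :=
    match q, a with
    | St.A, Sum.inl _ => St.A
    | St.A, Sum.inr _ => St.B
    | St.B, Sum.inl _ => St.D
    | St.B, Sum.inr _ => St.B
    | _, _ => St.D
  start := St.A
  accept := {q | q = St.A ∨ q = St.B}

def ioSpec (σ γ : Type) : St → Set (List (σ ⊕ γ))
  | St.A => InOut σ γ
  | St.B => InrStar σ γ
  | _ => ∅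

lemma ioDFA_correct (w : List (σ ⊕ γ)) : ∀ q, ((ioDFA σ γ).evalFrom q w ∈ (ioDFA σ γ).accept ↔ w ∈ ioSpec σ γ q) := by
  induction w with
  | nil =>
    intro q
    cases q <;>
      simp [ioDFA, ioSpec, DFA.evalFrom, nil_mem_InOut, nil_mem_InrStar]
  | cons a w ih =>
    intro q
    have step : (ioDFA σ γ).evalFrom q (a :: w) = (ioDFA σ γ).evalFrom ((ioDFA σ γ).step q a) w := rfl
    rw [step, ih]
    cases q <;> cases a <;>
      simp [ioDFA, ioSpec, InOut_cons_inl, InOut_cons_inr, InrStar_cons_inr,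
        InrStar_cons_inl]

lemma isReg_InOut : IsReg (InOut σ γ) := by
  refine ⟨St, inferInstance, ioDFA σ γ, ?_⟩
  ext w
  exact ioDFA_correct w St.A
-- CanonAut = PL ∪ PR
def PL (σ γ : Type) : Set (List (σ ⊕ γ)) := {w | ∃ (p : List (σ × γ)) (x : List σ), w = pairsW p ++ x.map Sum.inl}
def PR (σ γ : Type) : Set (List (σ ⊕ γ)) := {w | ∃ (p : List (σ × γ)) (y : List γ), w = pairsW p ++ y.map Sum.inr}

lemma canonAut_eq_union : CanonAut σ γ = PL σ γ ∪ PR σ γ := by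
  ext w
  constructor
  · rintro ⟨p, x, y, (rfl | rfl), rfl⟩
    · exact Or.inr ⟨p, y, by simp [pairsW]⟩
    · exact Or.inl ⟨p, x, by simp [pairsW]⟩
  · rintro (⟨p, x, rfl⟩ | ⟨p, y, rfl⟩)
    · exact ⟨p, x, [], Or.inr rfl, by simp [pairsW]⟩
    · exact ⟨p, [], y, Or.inl rfl, by simp [pairsW]⟩

lemma nil_mem_PL : ([] : List (σ ⊕ γ)) ∈ PL σ γ := ⟨[], [], rfl⟩
lemma nil_mem_PR : ([] : List (σ ⊕ γ)) ∈ PR σ γ := ⟨[], [], rfl⟩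

lemma pairsW_cons (ab : σ × γ) (p : List (σ × γ)) :
    pairsW (ab :: p) = Sum.inl ab.1 :: Sum.inr ab.2 :: pairsW p := by simp [pairsW]

lemma PL_cons_inl (a : σ) (w : List (σ ⊕ γ)) :
    Sum.inl a :: w ∈ PL σ γ ↔ (w ∈ InlStar σ γ ∨ ∃ (b : γ) (w' : List (σ ⊕ γ)), w = Sum.inr b :: w' ∧ w' ∈ PL σ γ) := by
  constructor
  · rintro ⟨p, x, h⟩
    cases p with
    | nil =>
      simp only [pairsW, List.flatMap_nil, List.nil_append] at h
      cases x with
      | nil => simp at h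
      | cons c x =>
        simp only [List.map_cons, List.cons.injEq] at h
        exact Or.inl ⟨x, h.2⟩
    | cons ab p =>
      rw [pairsW_cons] at h
      simp only [List.cons_append, List.cons.injEq] at h
      exact Or.inr ⟨ab.2, _, h.2, p, x, rfl⟩
  · rintro (⟨x, rfl⟩ | ⟨b, w', rfl, p, x, rfl⟩)
    · exact ⟨[], a :: x, rfl⟩
    · exact ⟨(a, b) :: p, x, by rw [pairsW_cons]; rfl⟩

lemma PL_cons_inr (b : γ) (w : List (σ ⊕ γ)) : Sum.inr b :: w ∉ PL σ γ := by
  rintro ⟨p, x, h⟩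
  cases p with
  | nil =>
    simp only [pairsW, List.flatMap_nil, List.nil_append] at h
    cases x with
    | nil => simp at h
    | cons c x => simp at h
  | cons ab p => rw [pairsW_cons] at h; simp at h

lemma PR_cons_inl (a : σ) (w : List (σ ⊕ γ)) :
    Sum.inl a :: w ∈ PR σ γ ↔ ∃ (b : γ) (w' : List (σ ⊕ γ)), w = Sum.inr b :: w' ∧ w' ∈ PR σ γ := by
  constructor
  · rintro ⟨p, y, h⟩
    cases p with
    | nil =>
      simp only [pairsW, List.flatMap_nil, List.nil_append] at h
      cases y with
      | nil => simp at h
      | cons c y => simp at h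
    | cons ab p =>
      rw [pairsW_cons] at h
      simp only [List.cons_append, List.cons.injEq] at h
      exact ⟨ab.2, _, h.2, p, y, rfl⟩
  · rintro ⟨b, w', rfl, p, y, rfl⟩
    exact ⟨(a, b) :: p, y, by rw [pairsW_cons]; rfl⟩

lemma PR_cons_inr (b : γ) (w : List (σ ⊕ γ)) :
    Sum.inr b :: w ∈ PR σ γ ↔ w ∈ InrStar σ γ := by
  constructor
  · rintro ⟨p, y, h⟩
    cases p with
    | nil =>
      simp only [pairsW, List.flatMap_nil, List.nil_append] at h
      cases y with
      | nil => simp at h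
      | cons c y =>
        simp only [List.map_cons, List.cons.injEq] at h
        exact ⟨y, h.2⟩
    | cons ab p => rw [pairsW_cons] at h; simp at h
  · rintro ⟨y, rfl⟩
    exact ⟨[], b :: y, rfl⟩

def plDFA (σ γ : Type) : DFA (σ ⊕ γ) St where
  step q a :=
    match q, a with
    | St.A, Sum.inl _ => St.B
    | St.A, Sum.inr _ => St.D
    | St.B, Sum.inl _ => St.C
    | St.B, Sum.inr _ => St.A
    | St.C, Sum.inl _ => St.C
    | _, _ => St.D
  start := St.A
  accept := {q | q = St.A ∨ q = St.B ∨ q = St.C}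

def plSpec (σ γ : Type) : St → Set (List (σ ⊕ γ))
  | St.A => PL σ γ
  | St.B => {w | w ∈ InlStar σ γ ∨ ∃ (b : γ) (w' : List (σ ⊕ γ)), w = Sum.inr b :: w' ∧ w' ∈ PL σ γ}
  | St.C => InlStar σ γ
  | St.D => ∅

lemma plDFA_correct (w : List (σ ⊕ γ)) :
    ∀ q, ((plDFA σ γ).evalFrom q w ∈ (plDFA σ γ).accept ↔ w ∈ plSpec σ γ q) := by
  induction w with
  | nil =>
    intro q
    cases q <;>
      simp [plDFA, plSpec, DFA.evalFrom, nil_mem_PL, nil_mem_InlStar]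
  | cons a w ih =>
    intro q
    have step : (plDFA σ γ).evalFrom q (a :: w) = (plDFA σ γ).evalFrom ((plDFA σ γ).step q a) w := rfl
    rw [step, ih]
    cases q <;> cases a <;>
      simp [plDFA, plSpec, PL_cons_inl, PL_cons_inr, InlStar_cons_inl, InlStar_cons_inr,
        InrStar_cons_inl, InrStar_cons_inr]

lemma isReg_PL : IsReg (PL σ γ) := ⟨St, inferInstance, plDFA σ γ, by ext w; exact plDFA_correct w St.A⟩

def prDFA (σ γ : Type) : DFA (σ ⊕ γ) St where
  step q a :=
    match q, a with
    | St.A, Sum.inl _ => St.B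
    | St.A, Sum.inr _ => St.C
    | St.B, Sum.inr _ => St.A
    | St.C, Sum.inr _ => St.C
    | _, _ => St.D
  start := St.A
  accept := {q | q = St.A ∨ q = St.C}

def prSpec (σ γ : Type) : St → Set (List (σ ⊕ γ))
  | St.A => PR σ γ
  | St.B => {w | ∃ (b : γ) (w' : List (σ ⊕ γ)), w = Sum.inr b :: w' ∧ w' ∈ PR σ γ}
  | St.C => InrStar σ γ
  | St.D => ∅

lemma prDFA_correct (w : List (σ ⊕ γ)) :
    ∀ q, ((prDFA σ γ).evalFrom q w ∈ (prDFA σ γ).accept ↔ w ∈ prSpec σ γ q) := by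
  induction w with
  | nil =>
    intro q
    cases q <;>
      simp [prDFA, prSpec, DFA.evalFrom, nil_mem_PR, nil_mem_InrStar]
  | cons a w ih =>
    intro q
    have step : (prDFA σ γ).evalFrom q (a :: w) = (prDFA σ γ).evalFrom ((prDFA σ γ).step q a) w := rfl
    rw [step, ih]
    cases q <;> cases a <;>
      simp [prDFA, prSpec, PR_cons_inl, PR_cons_inr, InrStar_cons_inl, InrStar_cons_inr]

lemma isReg_PR : IsReg (PR σ γ) := ⟨St, inferInstance, prDFA σ γ, by ext w; exact prDFA_correct w St.A⟩

lemma isReg_CanonAut : IsReg (CanonAut σ γ) := by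
  rw [canonAut_eq_union]
  exact isReg_union isReg_PL isReg_PR

lemma isReg_inOutRep {R : Set (List σ × List γ)} (h : Recognizable R) :
    IsReg {w | w ∈ InOut σ γ ∧ syncPair w ∈ R} := by
  obtain ⟨n, U, V, hUV, rfl⟩ := h
  have : {w | w ∈ InOut σ γ ∧ syncPair w ∈ ⋃ i, {p : List σ × List γ | p.1 ∈ U i ∧ p.2 ∈ V i}}
      = ⋃ i, (InOut σ γ ∩ {w | piIn w ∈ U i} ∩ {w | piOut w ∈ V i}) := by
    ext w
    simp only [Set.mem_setOf_eq, Set.mem_iUnion, Set.mem_inter_iff, syncPair]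
    tauto
  rw [this]
  exact isReg_iUnion_fin n _ fun i =>
    isReg_inter (isReg_inter isReg_InOut (isReg_piIn_preimage (hUV i).1))
      (isReg_piOut_preimage (hUV i).2)

lemma recognizable_of_reg_inOut {L : Set (List (σ ⊕ γ))} (hreg : IsReg L)
    (hsub : L ⊆ InOut σ γ) : Recognizable (syncRel L) := by
  obtain ⟨Q, hQ, M, rfl⟩ := hreg
  letI := hQ
  let e := Fintype.equivFin Q
  refine ⟨Fintype.card Q,
    fun i => {u | M.eval (u.map Sum.inl) = e.symm i},
    fun i => {v | M.evalFrom (e.symm i) (v.map Sum.inr) ∈ M.accept}, fun i => ⟨?_, ?_⟩, ?_⟩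
  · refine ⟨Q, hQ, ⟨fun q a => M.step q (Sum.inl a), M.start, {e.symm i}⟩, ?_⟩
    ext u
    simp only [DFA.mem_accepts, DFA.eval, DFA.evalFrom, Set.mem_singleton_iff,
      Set.mem_setOf_eq, List.foldl_map]
    exact Iff.rfl
  · refine ⟨Q, hQ, ⟨fun q b => M.step q (Sum.inr b), e.symm i, M.accept⟩, ?_⟩
    ext v
    simp only [DFA.mem_accepts, DFA.eval, DFA.evalFrom, Set.mem_setOf_eq, List.foldl_map]
    exact Iff.rfl
  · ext p
    obtain ⟨u, v⟩ := p
    rw [mem_syncRel_of_subset_inOut hsub]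
    simp only [Set.mem_iUnion, Set.mem_setOf_eq]
    have : canonIO u v ∈ M.accepts ↔
        M.evalFrom (M.eval (u.map Sum.inl)) (v.map Sum.inr) ∈ M.accept := by
      rw [DFA.mem_accepts]
      unfold canonIO
      rw [DFA.eval, M.evalFrom_of_append]
    refine this.trans ?_
    constructor
    · intro h
      exact ⟨e (M.eval (u.map Sum.inl)), by simp, by simpa using h⟩
    · rintro ⟨i, hi, hv⟩
      rwa [hi]

end Aux

/-- separability of disjoint automatic relations by a recognizable relation
reduces to the resynchronized definability problem with finite-shiftlag source and target:
with `S` the canonical representation of `R₂ᶜ` and `T = Σ*Γ* ∪ M`, where `M` is the canonical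
representation of `R₁ᶜ ∩ R₂ᶜ`, one has `⟦S⟧ ∈ Rel(T)` iff `R₁, R₂` are separable. -/
theorem stmt9 {σ γ : Type} (R1 R2 : Set (List σ × List γ))
    (h1 : Automatic R1) (h2 : Automatic R2) (hdisj : Disjoint R1 R2) :
    let S : Set (List (σ ⊕ γ)) := {w | w ∈ CanonAut σ γ ∧ syncPair w ∈ R2ᶜ}
    let M : Set (List (σ ⊕ γ)) := {w | w ∈ CanonAut σ γ ∧ syncPair w ∈ R1ᶜ ∩ R2ᶜ}
    let T : Set (List (σ ⊕ γ)) := InOut σ γ ∪ M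
    (syncRel S ∈ RelOf T ↔ ∃ R, Recognizable R ∧ R1 ⊆ R ∧ Disjoint R R2) := by
  intro S M T
  have hS : syncRel S = R2ᶜ := syncRel_canonSet _
  have hMrel : syncRel M = R1ᶜ ∩ R2ᶜ := syncRel_canonSet _
  obtain ⟨L1, hL1sub, hL1reg, hL1rel⟩ := h1
  obtain ⟨L2, hL2sub, hL2reg, hL2rel⟩ := h2
  have hL1eq := subset_canonAut_eq hL1sub hL1rel
  have hL2eq := subset_canonAut_eq hL2sub hL2rel
  have hMeq : M = CanonAut σ γ ∩ L1ᶜ ∩ L2ᶜ := by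
    rw [hL1eq, hL2eq]
    ext w
    simp only [Set.mem_inter_iff, Set.mem_compl_iff, Set.mem_setOf_eq, M]
    tauto
  have hMreg : IsReg M := by
    rw [hMeq]
    exact isReg_inter (isReg_inter isReg_CanonAut (isReg_compl hL1reg)) (isReg_compl hL2reg)
  constructor
  · rintro ⟨T', hT'sub, hT'reg, hT'rel⟩
    rw [hS] at hT'rel
    refine ⟨syncRel (T' ∩ InOut σ γ),
      recognizable_of_reg_inOut (isReg_inter hT'reg isReg_InOut) Set.inter_subset_right, ?_, ?_⟩
    · intro p hp
      have hpR2c : p ∈ R2ᶜ := Set.disjoint_left.mp hdisj hp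
      have hpT' : p ∈ syncRel T' := by rw [hT'rel]; exact hpR2c
      obtain ⟨w, hw, rfl⟩ := hpT'
      rcases hT'sub hw with hio | hm
      · exact ⟨w, ⟨hw, hio⟩, rfl⟩
      · exact absurd hp hm.2.1
    · rw [Set.disjoint_left]
      intro p hp
      have : p ∈ syncRel T' := syncRel_mono Set.inter_subset_left hp
      rw [hT'rel] at this
      exact this
  · rintro ⟨R, hRrec, hR1R, hRR2⟩
    refine ⟨{w | w ∈ InOut σ γ ∧ syncPair w ∈ R} ∪ M, ?_, ?_, ?_⟩
    · rintro w (hw | hw)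
      · exact Or.inl hw.1
      · exact Or.inr hw
    · exact isReg_union (isReg_inOutRep hRrec) hMreg
    · rw [syncRel_union, syncRel_inOutSet, hMrel, hS]
      apply Set.eq_of_subset_of_subset
      · rintro p (hp | hp)
        · exact Set.disjoint_left.mp hRR2 hp
        · exact hp.2
      · intro p hp
        by_cases hpR : p ∈ R
        · exact Or.inl hpR
        · exact Or.inr ⟨fun h => hpR (hR1R h), hp⟩
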